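/- For every natural number m ≥ 1 there exists a unique polynomial p_m ∈ ℤ[t] such that in the formal power series ring ℤ[[t]] one has (1-t)^{m+1} · Σ_{r≥1} r^m·t^r = t·p_m(t); moreover p_m is monic of degree m - 1. -/

import Mathlib

open Finset

lemma fd_pow_zero : ∀ m n : ℕ, m < n → (fwdDiff (1:ℤ))^[n] (fun x : ℤ => x ^ m) = 0 := by
  intro m
  induction m using Nat.strong_induction_on with
  | _ m IH =>
    intro n hn
    obtain ⟨n, rfl⟩ : ∃ k, n = k + 1 := ⟨n - 1, (Nat.succ_pred_eq_of_pos (Nat.pos_of_ne_zero (by omega))).symm⟩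
    have hstep : fwdDiff (1:ℤ) (fun x : ℤ => x ^ m)
        = ∑ j ∈ range m, fun x : ℤ => (m.choose j : ℤ) * x ^ j := by
      funext x
      simp only [fwdDiff, Finset.sum_apply]
      have := add_pow x (1:ℤ) m
      rw [show x + 1 = x + 1 from rfl]
      rw [this, Finset.sum_range_succ]
      simp [mul_comm]
    rw [Function.iterate_succ_apply, hstep]
    rw [fwdDiff_iter_finset_sum]
    apply Finset.sum_eq_zero
    intro j hj
    have hj' := Finset.mem_range.mp hj
    have : (fun x : ℤ => (m.choose j : ℤ) * x ^ j) = (m.choose j : ℤ) • (fun x : ℤ => x ^ j) := by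
      funext x; simp [smul_eq_mul]
    rw [this, fwdDiff_iter_const_smul, IH j hj' n (by omega)]
    simp

lemma key_sum (m : ℕ) (y : ℤ) :
    ∑ k ∈ range (m + 2), (-1 : ℤ) ^ k * ((m+1).choose k) * (y + (m+1) - k) ^ m = 0 := by
  have h0 := fwdDiff_iter_eq_sum_shift (1:ℤ) (fun x : ℤ => x ^ m) (m+1) y
  rw [fd_pow_zero m (m+1) (by omega)] at h0
  simp only [Pi.zero_apply, smul_eq_mul, nsmul_eq_mul, mul_one] at h0
  rw [← Finset.sum_range_reflect] at h0
  rw [← h0.symm]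
  apply Finset.sum_congr rfl
  intro k hk
  have hk' : k ≤ m + 1 := by simpa using Nat.lt_succ_iff.mp (Finset.mem_range.mp hk)
  have e1 : m + 1 + 1 - 1 - k = m + 1 - k := by omega
  have e2 : m + 1 - (m + 1 - k) = k := by omega
  rw [e1, e2]
  congr 2
  · rw [Nat.choose_symm hk']
  · push_cast [Nat.cast_sub hk']
    ring

lemma coeff_g (N j : ℕ) :
    (PowerSeries.coeff (R := ℤ) j) ((1 - PowerSeries.X) ^ N) = (-1 : ℤ) ^ j * N.choose j := by
  have hexp : (1 - PowerSeries.X : PowerSeries ℤ) ^ N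
      = ∑ k ∈ range (N + 1), ((-1 : ℤ) ^ k * N.choose k) • PowerSeries.X ^ k := by
    rw [sub_eq_add_neg, add_comm, add_pow]
    apply Finset.sum_congr rfl
    intro k hk
    rw [neg_pow, one_pow, zsmul_eq_mul]
    push_cast
    ring
  rw [hexp, map_sum]
  simp only [map_smul, map_zsmul, PowerSeries.coeff_X_pow, smul_eq_mul, mul_ite, mul_one, mul_zero]
  simp only [eq_comm (a := j)]
  rw [Finset.sum_ite_eq' (range (N+1)) j]
  by_cases hj : j ∈ range (N+1)
  · simp [hj]
  · rw [if_neg hj]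
    have : N.choose j = 0 := Nat.choose_eq_zero_of_lt (by simpa using Finset.mem_range.not.mp hj |> fun h => by omega)
    simp [this]

lemma coeff_F (m n : ℕ) :
    (PowerSeries.coeff (R := ℤ) n) ((1 - PowerSeries.X) ^ (m+1) * PowerSeries.mk (fun r => (r : ℤ) ^ m))
      = ∑ k ∈ range (n + 1), (-1 : ℤ) ^ k * ((m+1).choose k) * ((n - k : ℕ) : ℤ) ^ m := by
  rw [PowerSeries.coeff_mul, Finset.Nat.sum_antidiagonal_eq_sum_range_succ_mk]
  apply Finset.sum_congr rfl
  intro k hk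
  rw [coeff_g, PowerSeries.coeff_mk]

lemma coeff_F_zero (m : ℕ) (hm : 1 ≤ m) :
    (PowerSeries.coeff (R := ℤ) 0) ((1 - PowerSeries.X) ^ (m+1) * PowerSeries.mk (fun r => (r : ℤ) ^ m)) = 0 := by
  rw [coeff_F]
  simp [zero_pow (by omega : m ≠ 0)]

lemma coeff_F_high (m n : ℕ) (hn : m + 1 ≤ n) :
    (PowerSeries.coeff (R := ℤ) n) ((1 - PowerSeries.X) ^ (m+1) * PowerSeries.mk (fun r => (r : ℤ) ^ m)) = 0 := by
  rw [coeff_F]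
  rw [← Finset.sum_subset (Finset.range_subset_range.mpr (by omega : m + 2 ≤ n + 1))]
  · have := key_sum m ((n : ℤ) - (m + 1))
    rw [← this]
    apply Finset.sum_congr rfl
    intro k hk
    have hk' : k ≤ m + 1 := by simpa [Nat.lt_succ_iff] using hk
    congr 1
    rw [Nat.cast_sub (by omega)]
    ring_nf
  · intro k hk hk'
    have : m + 1 < k := by simp at hk hk'; omega
    simp [Nat.choose_eq_zero_of_lt this]

lemma coeff_F_top (m : ℕ) :
    (PowerSeries.coeff (R := ℤ) m) ((1 - PowerSeries.X) ^ (m+1) * PowerSeries.mk (fun r => (r : ℤ) ^ m)) = 1 := by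
  rw [coeff_F]
  have hfull := key_sum m (-1)
  rw [Finset.sum_range_succ] at hfull
  push_cast at hfull
  have hlast : (-1 : ℤ) ^ (m+1) * ((m+1).choose (m+1)) * (-1 + (m+1) - (m+1)) ^ m = -1 := by
    simp [← neg_pow, pow_succ]
  rw [hlast] at hfull
  have heq : ∑ k ∈ range (m + 1), (-1:ℤ) ^ k * ((m+1).choose k) * ((m - k : ℕ) : ℤ) ^ m
      = ∑ k ∈ range (m + 1), (-1:ℤ) ^ k * ((m+1).choose k) * (-1 + ((m:ℤ)+1) - k) ^ m := by
    apply Finset.sum_congr rfl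
    intro k hk
    have hk' : k ≤ m := by simpa [Nat.lt_succ_iff] using hk
    congr 1
    rw [Nat.cast_sub hk']
    ring_nf
  rw [heq]
  linarith

/-- For every `m ≥ 1` there is a unique polynomial `p ∈ ℤ[t]` with
`(1-t)^(m+1) · Σ_{r≥1} r^m·t^r = t·p(t)` in `ℤ[[t]]`; moreover `p` is monic of
degree `m - 1` (it is the `m`-th Eulerian polynomial). -/
theorem statement7 (m : ℕ) (hm : 1 ≤ m) :
    (∃! p : Polynomial ℤ,
        (1 - PowerSeries.X) ^ (m + 1) * PowerSeries.mk (fun r => (r : ℤ) ^ m) =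
          PowerSeries.X * (p : PowerSeries ℤ)) ∧
      ∀ p : Polynomial ℤ,
        (1 - PowerSeries.X) ^ (m + 1) * PowerSeries.mk (fun r => (r : ℤ) ^ m) =
            PowerSeries.X * (p : PowerSeries ℤ) →
          p.Monic ∧ p.natDegree = m - 1 := by
  set F := (1 - PowerSeries.X) ^ (m + 1) * PowerSeries.mk (fun r => (r : ℤ) ^ m) with hF
  set p : Polynomial ℤ :=
    ∑ i ∈ Finset.range m, Polynomial.C ((PowerSeries.coeff (R := ℤ) (i+1)) F) * Polynomial.X ^ i with hp
  have hpc : ∀ i, p.coeff i = (PowerSeries.coeff (R := ℤ) (i+1)) F := by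
    intro i
    rw [hp, Polynomial.finset_sum_coeff]
    simp only [Polynomial.coeff_C_mul, Polynomial.coeff_X_pow, mul_ite, mul_one, mul_zero]
    rw [Finset.sum_ite_eq (Finset.range m) i]
    by_cases hi : i ∈ Finset.range m
    · rw [if_pos hi]
    · rw [if_neg hi]
      have : m + 1 ≤ i + 1 := by simp at hi; omega
      rw [coeff_F_high m (i+1) this]
  have hXp : F = PowerSeries.X * (p : PowerSeries ℤ) := by
    ext n
    cases n with
    | zero => rw [PowerSeries.coeff_zero_X_mul]; exact coeff_F_zero m hm
    | succ n => rw [PowerSeries.coeff_succ_X_mul, Polynomial.coeff_coe, hpc n]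
  have htop : p.coeff (m - 1) = 1 := by
    rw [hpc, show m - 1 + 1 = m by omega]
    exact coeff_F_top m
  have hhigh : ∀ i, m ≤ i → p.coeff i = 0 := by
    intro i hi
    rw [hpc]
    exact coeff_F_high m (i+1) (by omega)
  have hdeg : p.natDegree = m - 1 := by
    apply le_antisymm
    · rw [Polynomial.natDegree_le_iff_coeff_eq_zero]
      intro N hN
      exact hhigh N (by omega)
    · exact Polynomial.le_natDegree_of_ne_zero (by rw [htop]; norm_num)
  have hmonic : p.Monic := by
    unfold Polynomial.Monic Polynomial.leadingCoeff
    rw [hdeg, htop]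
  have huniq : ∀ q : Polynomial ℤ, F = PowerSeries.X * (q : PowerSeries ℤ) → q = p := by
    intro q hq
    ext i
    have h1 := congrArg (PowerSeries.coeff (R := ℤ) (i+1)) (hq.symm.trans hXp)
    rwa [PowerSeries.coeff_succ_X_mul, PowerSeries.coeff_succ_X_mul,
      Polynomial.coeff_coe, Polynomial.coeff_coe] at h1
  exact ⟨⟨p, hXp, huniq⟩, fun q hq => (huniq q hq) ▸ ⟨hmonic, hdeg⟩⟩
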